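/- Every stable model M of the constructed program P determines a refutation soup for φ: namely, the set Z of all disjudgments Γ_ξ ⊬ a such that the atom G_a(ξ) belongs to M, where Γ_ξ = { ψ[S] | E(ψ,S,ξ) ∈ M }, is a refutation soup for φ. -/

import Mathlib

namespace ASP

/-- A ground clause `head ← pos, ¬neg` of an answer set program. -/
structure GClause (α : Type) where
  head : α
  pos : List α
  neg : List α

variable {α : Type}

/-- Immediate-consequence operator of the Gelfond–Lifschitz reduct `P^M`:
`F(I) = I ∪ {a | some clause a ← a₁,…,aₙ of P^M has all aᵢ ∈ I}`. -/
def tcons (P : Set (GClause α)) (M : Set α) : Set α →o Set α where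
  toFun I := I ∪ {a | ∃ c ∈ P, c.head = a ∧ (∀ b ∈ c.pos, b ∈ I) ∧ (∀ b ∈ c.neg, b ∉ M)}
  monotone' := by
    intro I J h x hx
    rcases hx with hx | ⟨c, hc, h1, h2, h3⟩
    · exact Or.inl (h hx)
    · exact Or.inr ⟨c, hc, h1, fun b hb => h (h2 b hb), h3⟩

/-- The interpretation `I(P,M)`: least fixed point of the immediate-consequence
operator of the reduct `P^M`. -/
def interp (P : Set (GClause α)) (M : Set α) : Set α := OrderHom.lfp (tcons P M)

/-- `M` is a stable model (answer set) of `P` iff `M = I(P,M)`. -/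
def IsStable (P : Set (GClause α)) (M : Set α) : Prop := M = interp P M

end ASP
namespace MFOL

/-- Formulas of minimal first-order logic (→ and ∀ only, no function symbols),
in de Bruijn representation; individual terms are just variables `ℕ`. -/
inductive Form where
  | atom : ℕ → List ℕ → Form
  | imp : Form → Form → Form
  | all : Form → Form
deriving DecidableEq

def upRen (σ : ℕ → ℕ) : ℕ → ℕ
  | 0 => 0
  | n + 1 => σ n + 1

/-- Capture-avoiding (simultaneous) substitution of variables for variables. -/
def substF : (ℕ → ℕ) → Form → Form
  | σ, .atom p args => .atom p (args.map σ)
  | σ, .imp a b => .imp (substF σ a) (substF σ b)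
  | σ, .all a => .all (substF (upRen σ) a)

/-- Substitution of the variable `x` for the outermost bound variable. -/
def subst0 (x : ℕ) : Form → Form :=
  substF (fun n => match n with | 0 => x | n + 1 => n)

def shiftF : Form → Form := substF Nat.succ

/-- Natural deduction for minimal first-order logic. -/
inductive Prv : Set Form → Form → Prop
  | ax {Γ : Set Form} {φ : Form} : φ ∈ Γ → Prv Γ φ
  | impI {Γ : Set Form} {φ ψ : Form} : Prv (insert φ Γ) ψ → Prv Γ (.imp φ ψ)
  | impE {Γ : Set Form} {φ ψ : Form} : Prv Γ (.imp φ ψ) → Prv Γ φ → Prv Γ ψ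
  | allI {Γ : Set Form} {φ : Form} : Prv (shiftF '' Γ) φ → Prv Γ (.all φ)
  | allE {Γ : Set Form} {φ : Form} (x : ℕ) : Prv Γ (.all φ) → Prv Γ (subst0 x φ)

mutual
  /-- The Σ₁ class of the Mints hierarchy: Σ₁ ::= a | Π₁ → Σ₁. -/
  inductive IsSigma1 : Form → Prop
    | atom (p : ℕ) (args : List ℕ) : IsSigma1 (.atom p args)
    | imp {τ σ : Form} : IsPi1 τ → IsSigma1 σ → IsSigma1 (.imp τ σ)
  /-- The Π₁ class of the Mints hierarchy: Π₁ ::= a | Σ₁ → Π₁ | ∀x.Π₁. -/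
  inductive IsPi1 : Form → Prop
    | atom (p : ℕ) (args : List ℕ) : IsPi1 (.atom p args)
    | imp {σ π : Form} : IsSigma1 σ → IsPi1 π → IsPi1 (.imp σ π)
    | all {π : Form} : IsPi1 π → IsPi1 (.all π)
end

def IsAtomF (f : Form) : Prop := ∃ p args, f = Form.atom p args

/-- Premises τ₁,…,τ_q of a Σ₁ formula τ₁ → ⋯ → τ_q → c. -/
def premsOf : Form → List Form
  | .imp a b => a :: premsOf b
  | .atom p args => []
  | .all a => []

/-- Target atom of a Σ₁ formula. -/
def targetOf : Form → Form
  | .imp _ b => targetOf b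
  | f => f

/-- `Unfolds ψ prems b` : instantiating the ∀-blocks of the Π₁ formula
`ψ = ∀ȳ₁(σ₁ → ∀ȳ₂(σ₂ → ⋯ → ∀ȳ_k(σ_k → b')⋯))` at some variables x̄
yields the list of (instantiated) premises `prems = [σ₁[ȳ:=x̄],…]` and
the (instantiated) target atom `b = b'[ȳ:=x̄]`. -/
inductive Unfolds : Form → List Form → Form → Prop
  | atom (p : ℕ) (args : List ℕ) : Unfolds (.atom p args) [] (.atom p args)
  | imp {σ ψ : Form} {prems : List Form} {b : Form} :
      Unfolds ψ prems b → Unfolds (.imp σ ψ) (σ :: prems) b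
  | all {ψ : Form} {prems : List Form} {b : Form} (x : ℕ) :
      Unfolds (subst0 x ψ) prems b → Unfolds (.all ψ) prems b

/-- `closedAt k φ`: all free de Bruijn indices of `φ` are `< k`. -/
def closedAt : ℕ → Form → Prop
  | k, .atom _ args => ∀ x ∈ args, x < k
  | k, .imp a b => closedAt k a ∧ closedAt k b
  | k, .all a => closedAt (k + 1) a

end MFOL
namespace MFOL

/-- Subformula relation. -/
inductive SubfOf : Form → Form → Prop
  | refl (φ : Form) : SubfOf φ φ
  | impL {χ a b : Form} : SubfOf χ a → SubfOf χ (.imp a b)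
  | impR {χ a b : Form} : SubfOf χ b → SubfOf χ (.imp a b)
  | all {χ a : Form} : SubfOf χ a → SubfOf χ (.all a)

/-- Substitution instances of Π₁ subformulas of φ. -/
def Insts (φ : Form) : Set Form :=
  {τ | ∃ ψ, SubfOf ψ φ ∧ IsPi1 ψ ∧ ∃ σ : ℕ → ℕ, τ = substF σ ψ}

/-- An i-th answer in `Z` to the question challenging premise `σ`
asked at a disjudgment with environment `Γ`. -/
def IsAnswerOf (Z : Set (Set Form × Form)) (Γ : Set Form) (σ : Form) : Prop :=
  ∃ z ∈ Z, z.2 = targetOf σ ∧ Γ ∪ {τ | τ ∈ premsOf σ} ⊆ z.1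

/-- A refutation soup for φ: a set of disjudgments `Γ ⊬ a` containing the
initial disjudgment (the decomposition of φ) and such that every question
asked at a member of `Z` has some i-th answer in `Z`. -/
def IsSoup (φ : Form) (Z : Set (Set Form × Form)) : Prop :=
  ({τ | τ ∈ premsOf φ}, targetOf φ) ∈ Z ∧
  (∀ z ∈ Z, z.1 ⊆ Insts φ ∧ IsAtomF z.2) ∧
  (∀ z ∈ Z, ∀ ψ ∈ z.1, ∀ prems, Unfolds ψ prems z.2 → ∃ σ ∈ prems, IsAnswerOf Z z.1 σ)

/-- Length of a formula. -/
def fsize : Form → ℕ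
  | .atom _ args => 1 + args.length
  | .imp a b => fsize a + fsize b + 1
  | .all a => fsize a + 1

/-- Maximal arity of a predicate occurring in a formula. -/
def maxAr : Form → ℕ
  | .atom _ args => args.length
  | .imp a b => max (maxAr a) (maxAr b)
  | .all a => maxAr a

end MFOL
namespace MFOL

/-- Addresses: bit vectors (of length `n^r`). -/
abbrev Addr := List Bool

def addrLen (φ : Form) : ℕ := fsize φ ^ maxAr φ

def addr0 (φ : Form) : Addr := List.replicate (addrLen φ) false

def AddrOk (φ : Form) (ξ : Addr) : Prop := ξ.length = addrLen φ

/-- Atoms of the answer-set program constructed from φ. -/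
inductive PAt where
  | G : Form → Addr → PAt
  | E : Form → Addr → PAt
  | Ebar : Form → Addr → PAt
  | Q : Form → List Form → Form → Addr → PAt
  | A : ℕ → Form → List Form → Form → Addr → Addr → PAt
  | Abar : ℕ → Form → List Form → Form → Addr → Addr → PAt
  | Y : Form → List Form → Form → Addr → PAt
  | F : PAt

/-- Syntactic correctness of a question datum: ψ is an instance of a Π₁
subformula of φ and unfolds to the premises `prems` and target `tgt`. -/
def QOk (φ ψ : Form) (prems : List Form) (tgt : Form) : Prop :=
  ψ ∈ Insts φ ∧ Unfolds ψ prems tgt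

/-- The clauses of the answer-set program constructed from φ
('refutations into programs'): initialization facts at address 0…0,
answer-propagation clauses for environments and goals, choice clauses for
E/Ē and Aᵢ/Āᵢ, the question clause, totality clauses via Y and F, and
goal-uniqueness constraints. -/
inductive InSoupProg (φ : Form) : ASP.GClause PAt → Prop
  | initG : InSoupProg φ ⟨.G (targetOf φ) (addr0 φ), [], []⟩
  | initE {ψ} : ψ ∈ premsOf φ → InSoupProg φ ⟨.E ψ (addr0 φ), [], []⟩
  | initEbar {ψ} : ψ ∈ Insts φ → ψ ∉ premsOf φ →
      InSoupProg φ ⟨.Ebar ψ (addr0 φ), [], []⟩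
  | propE {i ψ prems tgt ξ η τ} : AddrOk φ ξ → AddrOk φ η → QOk φ ψ prems tgt →
      τ ∈ Insts φ →
      InSoupProg φ ⟨.E τ η, [.A i ψ prems tgt ξ η, .E τ ξ], []⟩
  | propD {i ψ prems tgt ξ η σ τ} : AddrOk φ ξ → AddrOk φ η → QOk φ ψ prems tgt →
      prems[i]? = some σ → τ ∈ premsOf σ →
      InSoupProg φ ⟨.E τ η, [.A i ψ prems tgt ξ η], []⟩
  | propG {i ψ prems tgt ξ η σ} : AddrOk φ ξ → AddrOk φ η → QOk φ ψ prems tgt →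
      prems[i]? = some σ →
      InSoupProg φ ⟨.G (targetOf σ) η, [.A i ψ prems tgt ξ η], []⟩
  | choiceE {ψ ξ} : ψ ∈ Insts φ → AddrOk φ ξ →
      InSoupProg φ ⟨.E ψ ξ, [], [.Ebar ψ ξ]⟩
  | choiceEbar {ψ ξ} : ψ ∈ Insts φ → AddrOk φ ξ →
      InSoupProg φ ⟨.Ebar ψ ξ, [], [.E ψ ξ]⟩
  | conflE {ψ ξ} : ψ ∈ Insts φ → AddrOk φ ξ →
      InSoupProg φ ⟨.F, [.E ψ ξ, .Ebar ψ ξ], [.F]⟩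
  | choiceA {i ψ prems tgt ξ η} : AddrOk φ ξ → AddrOk φ η → QOk φ ψ prems tgt →
      i < prems.length →
      InSoupProg φ ⟨.A i ψ prems tgt ξ η, [.Q ψ prems tgt ξ], [.Abar i ψ prems tgt ξ η]⟩
  | choiceAbar {i ψ prems tgt ξ η} : AddrOk φ ξ → AddrOk φ η → QOk φ ψ prems tgt →
      i < prems.length →
      InSoupProg φ ⟨.Abar i ψ prems tgt ξ η, [.Q ψ prems tgt ξ], [.A i ψ prems tgt ξ η]⟩
  | quest {ψ prems tgt ξ} : AddrOk φ ξ → QOk φ ψ prems tgt →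
      InSoupProg φ ⟨.Q ψ prems tgt ξ, [.E ψ ξ, .G tgt ξ], []⟩
  | totF {ψ prems tgt ξ} : AddrOk φ ξ → QOk φ ψ prems tgt →
      InSoupProg φ ⟨.F, [.Q ψ prems tgt ξ], [.Y ψ prems tgt ξ, .F]⟩
  | totY {i ψ prems tgt ξ η} : AddrOk φ ξ → AddrOk φ η → QOk φ ψ prems tgt →
      i < prems.length →
      InSoupProg φ ⟨.Y ψ prems tgt ξ, [.A i ψ prems tgt ξ η], []⟩
  | uniqG {a b ξ} : AddrOk φ ξ → a ≠ b →
      InSoupProg φ ⟨.F, [.G a ξ, .G b ξ], [.F]⟩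

/-- The constructed program as a set of clauses. -/
def SoupProg (φ : Form) : Set (ASP.GClause PAt) := {c | InSoupProg φ c}

end MFOL

section Aux
open MFOL ASP

namespace ASP

theorem stable_closed {α : Type} {P : Set (GClause α)} {M : Set α} (hM : IsStable P M)
    {c : GClause α} (hc : c ∈ P) (hpos : ∀ b ∈ c.pos, b ∈ M)
    (hneg : ∀ b ∈ c.neg, b ∉ M) : c.head ∈ M := by
  have key : tcons P M (interp P M) = interp P M := OrderHom.map_lfp (tcons P M)
  rw [← hM] at key
  have : c.head ∈ tcons P M M := Or.inr ⟨c, hc, rfl, hpos, hneg⟩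
  rwa [key] at this

theorem stable_induction {α : Type} {P : Set (GClause α)} {M : Set α} (hM : IsStable P M)
    (S : Set α)
    (h : ∀ c ∈ P, (∀ b ∈ c.pos, b ∈ S ∩ M) → (∀ b ∈ c.neg, b ∉ M) → c.head ∈ S) :
    M ⊆ S := by
  have hle : tcons P M (S ∩ M) ≤ S ∩ M := by
    intro a ha
    rcases ha with ha | ⟨c, hc, rfl, hpos, hneg⟩
    · exact ha
    · exact ⟨h c hc hpos hneg,
        stable_closed hM hc (fun b hb => (hpos b hb).2) hneg⟩
  have h2 : OrderHom.lfp (tcons P M) ≤ S ∩ M := OrderHom.lfp_le _ hle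
  rw [hM]
  exact le_trans h2 Set.inter_subset_left

end ASP

namespace MFOL

theorem upRen_id : upRen id = id := by
  funext n; cases n <;> rfl

theorem substF_id (f : Form) : substF id f = f := by
  induction f with
  | atom p args => simp [substF]
  | imp a b iha ihb => simp [substF, iha, ihb]
  | all a ih => simp [substF, upRen_id, ih]

theorem upRen_comp (σ τ : ℕ → ℕ) : upRen σ ∘ upRen τ = upRen (σ ∘ τ) := by
  funext n; cases n <;> rfl

theorem substF_comp (σ τ : ℕ → ℕ) (f : Form) :
    substF σ (substF τ f) = substF (σ ∘ τ) f := by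
  induction f generalizing σ τ with
  | atom p args => simp [substF, List.map_map]
  | imp a b iha ihb => simp [substF, iha, ihb]
  | all a ih => simp [substF, ih, upRen_comp]

theorem subf_trans {a b c : Form} (h1 : SubfOf a b) (h2 : SubfOf b c) : SubfOf a c := by
  induction h2 with
  | refl => exact h1
  | impL _ ih => exact .impL ih
  | impR _ ih => exact .impR ih
  | all _ ih => exact .all ih

theorem addrOk_addr0 (φ : Form) : AddrOk φ (addr0 φ) := by
  simp [AddrOk, addr0]

theorem target_atom_inst : ∀ {s : Form}, IsSigma1 s → ∀ θ, IsAtomF (targetOf (substF θ s))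
  | .atom p args, _, θ => ⟨p, args.map θ, rfl⟩
  | .imp a b, h, θ => by
      cases h with
      | imp _ hb => exact target_atom_inst hb θ
  | .all a, h, θ => by cases h

theorem premsOf_inst : ∀ {s : Form}, IsSigma1 s → ∀ θ,
    premsOf (substF θ s) = (premsOf s).map (substF θ)
  | .atom p args, _, θ => rfl
  | .imp a b, h, θ => by
      cases h with
      | imp _ hb => simp [substF, premsOf, premsOf_inst hb θ]
  | .all a, h, _ => by cases h

theorem prems_pi1 : ∀ {s : Form}, IsSigma1 s → ∀ τ ∈ premsOf s, IsPi1 τ ∧ SubfOf τ s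
  | .atom _ _, _, τ, hτ => by simp [premsOf] at hτ
  | .imp a b, h, τ, hτ => by
      cases h with
      | imp ha hb =>
        rcases List.mem_cons.mp hτ with rfl | hτ'
        · exact ⟨ha, .impL (.refl τ)⟩
        · obtain ⟨h1, h2⟩ := prems_pi1 hb τ hτ'
          exact ⟨h1, .impR h2⟩
  | .all a, h, _, _ => by cases h

theorem unfolds_mem {ψ : Form} {prems : List Form} {tgt : Form} (h : Unfolds ψ prems tgt) :
    ∀ ψ₀ θ, IsPi1 ψ₀ → ψ = substF θ ψ₀ →
    ∀ σ ∈ prems, ∃ σ₀ θ', IsSigma1 σ₀ ∧ SubfOf σ₀ ψ₀ ∧ σ = substF θ' σ₀ := by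
  induction h with
  | atom p args => intro _ _ _ _ σ hσ; simp at hσ
  | @imp σ ψ1 prems1 b hu ih =>
    intro ψ₀ θ hpi heq σ' hσ'
    cases ψ₀ with
    | atom p args => simp [substF] at heq
    | imp a b' =>
      simp only [substF, Form.imp.injEq] at heq
      obtain ⟨h1, h2⟩ := heq
      cases hpi with
      | imp hS hP =>
        rcases List.mem_cons.mp hσ' with rfl | ht
        · exact ⟨a, θ, hS, .impL (.refl a), h1⟩
        · obtain ⟨σ₀, θ', hs1, hs2, hs3⟩ := ih b' θ hP h2 σ' ht
          exact ⟨σ₀, θ', hs1, .impR hs2, hs3⟩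
    | all a => simp [substF] at heq
  | @all ψ1 prems1 b x hu ih =>
    intro ψ₀ θ hpi heq σ' hσ'
    cases ψ₀ with
    | atom p args => simp [substF] at heq
    | imp a b' => simp [substF] at heq
    | all a =>
      simp only [substF, Form.all.injEq] at heq
      cases hpi with
      | all hPa =>
        have hcomp : subst0 x ψ1 =
            substF ((fun n => match n with | 0 => x | n + 1 => n) ∘ upRen θ) a := by
          rw [heq]
          exact substF_comp _ _ a
        obtain ⟨σ₀, θ', hs1, hs2, hs3⟩ := ih a _ hPa hcomp σ' hσ'
        exact ⟨σ₀, θ', hs1, .all hs2, hs3⟩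

theorem prems_insts {φ : Form} (hφ : IsSigma1 φ) {ψ : Form} (h : ψ ∈ premsOf φ) :
    ψ ∈ Insts φ := by
  obtain ⟨h1, h2⟩ := prems_pi1 hφ ψ h
  exact ⟨ψ, h2, h1, id, (substF_id ψ).symm⟩

theorem prem_sigma_inst {φ ψ : Form} (hψ : ψ ∈ Insts φ) {prems : List Form} {tgt : Form}
    (hun : Unfolds ψ prems tgt) {σ : Form} (hσ : σ ∈ prems) :
    ∃ σ₀ θ, IsSigma1 σ₀ ∧ SubfOf σ₀ φ ∧ σ = substF θ σ₀ := by
  obtain ⟨ψ₀, hsub, hpi, θ, heq⟩ := hψ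
  obtain ⟨σ₀, θ', h1, h2, h3⟩ := unfolds_mem hun ψ₀ θ hpi heq σ hσ
  exact ⟨σ₀, θ', h1, subf_trans h2 hsub, h3⟩

theorem prem_target_atom {φ ψ : Form} (hψ : ψ ∈ Insts φ) {prems : List Form} {tgt : Form}
    (hun : Unfolds ψ prems tgt) {σ : Form} (hσ : σ ∈ prems) : IsAtomF (targetOf σ) := by
  obtain ⟨σ₀, θ, h1, _, h3⟩ := prem_sigma_inst hψ hun hσ
  rw [h3]
  exact target_atom_inst h1 θ

theorem prem_prems_insts {φ ψ : Form} (hψ : ψ ∈ Insts φ) {prems : List Form} {tgt : Form}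
    (hun : Unfolds ψ prems tgt) {σ : Form} (hσ : σ ∈ prems) {τ : Form}
    (hτ : τ ∈ premsOf σ) : τ ∈ Insts φ := by
  obtain ⟨σ₀, θ, h1, h2, h3⟩ := prem_sigma_inst hψ hun hσ
  rw [h3, premsOf_inst h1 θ] at hτ
  obtain ⟨τ₀, hm, rfl⟩ := List.mem_map.mp hτ
  obtain ⟨hp1, hp2⟩ := prems_pi1 h1 τ₀ hm
  exact ⟨τ₀, subf_trans hp2 h2, hp1, θ, rfl⟩

/-- Invariant holding of every atom of a stable model. -/
def GoodAt (φ : Form) (M : Set PAt) : PAt → Prop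
  | .F => False
  | .E ψ _ => ψ ∈ Insts φ
  | .G a ξ => IsAtomF a ∧ AddrOk φ ξ
  | .A i ψ prems tgt ξ η =>
      AddrOk φ ξ ∧ AddrOk φ η ∧ QOk φ ψ prems tgt ∧ i < prems.length
  | .Y ψ prems tgt ξ => ∃ i η, i < prems.length ∧ PAt.A i ψ prems tgt ξ η ∈ M
  | _ => True

theorem target_atom_of_sigma1 {φ : Form} (hφ : IsSigma1 φ) : IsAtomF (targetOf φ) := by
  have := target_atom_inst hφ id
  rwa [substF_id] at this

theorem good_all {φ : Form} (hφ : IsSigma1 φ) {M : Set PAt}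
    (hM : ASP.IsStable (SoupProg φ) M) : ∀ a ∈ M, GoodAt φ M a := by
  intro a ha
  refine ASP.stable_induction hM {a | GoodAt φ M a} ?_ ha
  intro c hc hpos hneg
  have hc2 := hc
  cases hc2 with
  | initG => exact ⟨target_atom_of_sigma1 hφ, addrOk_addr0 φ⟩
  | initE hmem => exact prems_insts hφ hmem
  | initEbar h1 h2 => trivial
  | propE h1 h2 hq hτ => exact hτ
  | @propD i ψ prems tgt ξ η σ τ h1 h2 hq hget hτ =>
    exact prem_prems_insts hq.1 hq.2 (List.mem_of_getElem? hget) hτ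
  | @propG i ψ prems tgt ξ η σ h1 h2 hq hget =>
    exact ⟨prem_target_atom hq.1 hq.2 (List.mem_of_getElem? hget), h2⟩
  | choiceE h1 h2 => exact h1
  | choiceEbar h1 h2 => trivial
  | conflE h1 h2 =>
    exact absurd (ASP.stable_closed hM hc (fun b hb => (hpos b hb).2) hneg)
      (hneg .F (by simp))
  | choiceA h1 h2 hq hlen => exact ⟨h1, h2, hq, hlen⟩
  | choiceAbar h1 h2 hq hlen => trivial
  | quest h1 hq => trivial
  | totF h1 hq =>
    exact absurd (ASP.stable_closed hM hc (fun b hb => (hpos b hb).2) hneg)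
      (hneg .F (by simp))
  | @totY i ψ prems tgt ξ η h1 h2 hq hlen =>
    exact ⟨i, η, hlen, (hpos _ (by simp)).2⟩
  | uniqG h1 hne =>
    exact absurd (ASP.stable_closed hM hc (fun b hb => (hpos b hb).2) hneg)
      (hneg .F (by simp))

theorem F_not_mem {φ : Form} (hφ : IsSigma1 φ) {M : Set PAt}
    (hM : ASP.IsStable (SoupProg φ) M) : PAt.F ∉ M := by
  intro h
  exact good_all hφ hM _ h

end MFOL
end Aux
/-- Every stable model M of the constructed program determines a refutation
soup for φ: the set of all disjudgments Γ_ξ ⊬ a with G_a(ξ) ∈ M and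
Γ_ξ = {ψ | E(ψ,ξ) ∈ M}. -/
theorem stmt16 (φ : MFOL.Form) (hφ : MFOL.IsSigma1 φ) (M : Set MFOL.PAt)
    (hM : ASP.IsStable (MFOL.SoupProg φ) M) :
    MFOL.IsSoup φ
      {z | ∃ ξ a, MFOL.PAt.G a ξ ∈ M ∧ z = ({ψ | MFOL.PAt.E ψ ξ ∈ M}, a)} := by
  classical
  open MFOL in
  have good : ∀ a ∈ M, GoodAt φ M a := good_all hφ hM
  have hF : MFOL.PAt.F ∉ M := MFOL.F_not_mem hφ hM
  have nilpos : ∀ b ∈ ([] : List MFOL.PAt), b ∈ M := by intro b hb; simp at hb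
  have nilneg : ∀ b ∈ ([] : List MFOL.PAt), b ∉ M := by intro b hb; simp at hb
  refine ⟨?_, ?_, ?_⟩
  · -- initial disjudgment
    have hG0 : MFOL.PAt.G (MFOL.targetOf φ) (MFOL.addr0 φ) ∈ M :=
      ASP.stable_closed hM MFOL.InSoupProg.initG nilpos nilneg
    refine ⟨MFOL.addr0 φ, MFOL.targetOf φ, hG0, ?_⟩
    have hset : {τ | τ ∈ MFOL.premsOf φ} = {ψ | MFOL.PAt.E ψ (MFOL.addr0 φ) ∈ M} := by
      ext τ
      constructor
      · intro hτ
        exact ASP.stable_closed hM (MFOL.InSoupProg.initE hτ) nilpos nilneg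
      · intro hE
        by_contra hnp
        have hIn : τ ∈ MFOL.Insts φ := good _ hE
        have hEbar : MFOL.PAt.Ebar τ (MFOL.addr0 φ) ∈ M :=
          ASP.stable_closed hM (MFOL.InSoupProg.initEbar hIn hnp) nilpos nilneg
        refine hF (ASP.stable_closed hM
          (MFOL.InSoupProg.conflE hIn (MFOL.addrOk_addr0 φ)) ?_ ?_)
        · intro b hb
          rcases List.mem_cons.mp hb with rfl | hb
          · exact hE
          · rcases List.mem_cons.mp hb with rfl | hb
            · exact hEbar
            · simp at hb
        · intro b hb
          rcases List.mem_cons.mp hb with rfl | hb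
          · exact hF
          · simp at hb
    rw [hset]
  · -- every disjudgment is a proper disjudgment
    rintro z ⟨ξ, a, hGa, rfl⟩
    constructor
    · intro τ hτ
      exact good _ hτ
    · exact (good _ hGa).1
  · -- every question has an answer
    rintro z ⟨ξ, a, hGa, rfl⟩ ψ hψ prems hun
    have hψM : MFOL.PAt.E ψ ξ ∈ M := hψ
    have hIn : ψ ∈ MFOL.Insts φ := good _ hψM
    have hAok : MFOL.AddrOk φ ξ := (good _ hGa).2
    have hQok : MFOL.QOk φ ψ prems a := ⟨hIn, hun⟩
    have hQ : MFOL.PAt.Q ψ prems a ξ ∈ M := by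
      refine ASP.stable_closed hM (MFOL.InSoupProg.quest hAok hQok) ?_ nilneg
      intro b hb
      rcases List.mem_cons.mp hb with rfl | hb
      · exact hψM
      · rcases List.mem_cons.mp hb with rfl | hb
        · exact hGa
        · simp at hb
    have hY : MFOL.PAt.Y ψ prems a ξ ∈ M := by
      by_contra hy
      refine hF (ASP.stable_closed hM (MFOL.InSoupProg.totF hAok hQok) ?_ ?_)
      · intro b hb
        rcases List.mem_cons.mp hb with rfl | hb
        · exact hQ
        · simp at hb
      · intro b hb
        rcases List.mem_cons.mp hb with rfl | hb
        · exact hy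
        · rcases List.mem_cons.mp hb with rfl | hb
          · exact hF
          · simp at hb
    obtain ⟨i, η, hi, hA⟩ := good _ hY
    obtain ⟨_, hηok, _, _⟩ := good _ hA
    have hget : prems[i]? = some (prems.get ⟨i, hi⟩) := by simp [hi]
    set σ := prems.get ⟨i, hi⟩ with hσdef
    have hposA : ∀ b ∈ [MFOL.PAt.A i ψ prems a ξ η], b ∈ M := by
      intro b hb
      rcases List.mem_cons.mp hb with rfl | hb
      · exact hA
      · simp at hb
    have hGd : MFOL.PAt.G (MFOL.targetOf σ) η ∈ M :=
      ASP.stable_closed hM (MFOL.InSoupProg.propG hAok hηok hQok hget) hposA nilneg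
    refine ⟨σ, List.get_mem prems ⟨i, hi⟩, ?_⟩
    refine ⟨({τ | MFOL.PAt.E τ η ∈ M}, MFOL.targetOf σ), ⟨η, MFOL.targetOf σ, hGd, rfl⟩,
      rfl, ?_⟩
    intro τ hτ
    rcases hτ with hτ | hτ
    · have hτM : MFOL.PAt.E τ ξ ∈ M := hτ
      have hτI : τ ∈ MFOL.Insts φ := good _ hτM
      refine ASP.stable_closed hM (MFOL.InSoupProg.propE (i := i) hAok hηok hQok hτI) ?_ nilneg
      intro b hb
      rcases List.mem_cons.mp hb with rfl | hb
      · exact hA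
      · rcases List.mem_cons.mp hb with rfl | hb
        · exact hτM
        · simp at hb
    · exact ASP.stable_closed hM (MFOL.InSoupProg.propD hAok hηok hQok hget hτ)
        hposA nilneg
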